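/- Let R ≥ 0 and define, for real numbers a ≥ b ≥ 0, H(a,b) := ∑_{ℓ=0}^∞ 2^{−ℓ} R^{ℓ+1} (a²−b²)^ℓ/(ℓ!·(ℓ+1)!), so that H(a,b) = √(2R/(a²−b²)) · I₁(√(a²−b²)·√(2R)) whenever a > b. Then for all L₁ ≥ L₂ > 0 one has ∫₀^R I₀(L₁√(2r)) · I₀(L₂√(2r)) dr = H(L₁,L₂) + ∫₀^{L₂} H(L₁,K) · H(L₂,K) · K dK. -/

import Mathlib

open Real MeasureTheory Finset

/-- Modified Bessel function of the first kind of integer order `ν`. -/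
noncomputable def besselI (ν : ℕ) (x : ℝ) : ℝ :=
  ∑' k : ℕ, (x / 2) ^ (2 * k + ν) / ((Nat.factorial k : ℝ) * (Nat.factorial (k + ν) : ℝ))

/-- The half-tight cylinder generating function
`H(a,b) = ∑_{ℓ≥0} 2^{-ℓ} R^{ℓ+1} (a²-b²)^ℓ / (ℓ!(ℓ+1)!)`. -/
noncomputable def Hfun (R a b : ℝ) : ℝ :=
  ∑' ℓ : ℕ, R ^ (ℓ + 1) * (a ^ 2 - b ^ 2) ^ ℓ /
    (2 ^ ℓ * (Nat.factorial ℓ : ℝ) * (Nat.factorial (ℓ + 1) : ℝ))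


lemma cert (p a b : ℕ) :
    ((p+a).choose p : ℝ) / ((p+a).factorial * (p+a+1).factorial * b.factorial * (b+1).factorial)
    = ((a:ℝ)+b+1)/((p:ℝ)+a+b+2) * (((p+a).choose p : ℝ) / (((p+a).factorial:ℝ)^2 * ((b+1).factorial:ℝ)^2))
      + ( ((a:ℝ)+1) * ((p+a+1).choose p : ℝ) / (((p:ℝ)+a+b+2) * ((p+a+1).factorial:ℝ)^2 * ((b.factorial:ℝ))^2)
        - (a:ℝ) * ((p+a).choose p : ℝ) / (((p:ℝ)+a+b+2) * ((p+a).factorial:ℝ)^2 * (((b+1).factorial:ℝ))^2) ) := by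
  have h3 : ((p+a+1).choose p : ℝ) * ((a:ℝ)+1) = ((p:ℝ)+a+1) * ((p+a).choose p : ℝ) := by
    have h := Nat.add_one_mul_choose_eq (p+a) a
    have e1 : (p+a).choose a = (p+a).choose p := by
      rw [← Nat.choose_symm (Nat.le_add_left a p)]; congr 1; omega
    have e2 : (p+a+1).choose (a+1) = (p+a+1).choose p := by
      rw [← Nat.choose_symm (by omega : a+1 ≤ p+a+1)]; congr 1; omega
    rw [e1, e2] at h
    exact_mod_cast congrArg (Nat.cast : ℕ → ℝ) h.symm
  have hf1 : ((p+a+1).factorial : ℝ) = ((p:ℝ)+a+1) * (p+a).factorial := by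
    rw [show p+a+1 = (p+a)+1 from rfl, Nat.factorial_succ]; push_cast; ring
  have hf2 : ((b+1).factorial : ℝ) = ((b:ℝ)+1) * b.factorial := by
    rw [Nat.factorial_succ]; push_cast; ring
  have hA : (0:ℝ) < (p+a).factorial := by exact_mod_cast (p+a).factorial_pos
  have hB : (0:ℝ) < b.factorial := by exact_mod_cast b.factorial_pos
  have hq : (0:ℝ) < (p:ℝ)+a+b+2 := by positivity
  have ha1 : (0:ℝ) < (a:ℝ)+1 := by positivity
  have hpa1 : (0:ℝ) < (p:ℝ)+a+1 := by positivity
  have h3' : ((p+a+1).choose p : ℝ) = ((p:ℝ)+a+1) * ((p+a).choose p : ℝ) / ((a:ℝ)+1) := by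
    field_simp; linarith [h3]
  rw [hf1, hf2, h3']
  field_simp
  ring

lemma coeff (p s : ℕ) :
    ((s:ℝ)+1)/((p:ℝ)+s+2) * ∑ k ∈ range (p+s+2), ((k.choose p : ℝ) / ((k.factorial:ℝ)^2 * (((p+s+1-k).factorial:ℝ))^2))
    = ∑ ℓ ∈ range (p+s+1), ((ℓ.choose p : ℝ) / (ℓ.factorial * (ℓ+1).factorial * ((p+s-ℓ).factorial) * ((p+s+1-ℓ).factorial))) := by
  -- restrict sums to k ≥ p and reindex
  have hres1 : ∑ k ∈ range (p+s+2), ((k.choose p : ℝ) / ((k.factorial:ℝ)^2 * (((p+s+1-k).factorial:ℝ))^2))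
      = ∑ a ∈ range (s+2), (((p+a).choose p : ℝ) / (((p+a).factorial:ℝ)^2 * (((s+1-a).factorial:ℝ))^2)) := by
    rw [show p+s+2 = p + (s+2) by ring, Finset.sum_range_add]
    have h0 : ∑ k ∈ range p, ((k.choose p : ℝ) / ((k.factorial:ℝ)^2 * (((p+s+1-k).factorial:ℝ))^2)) = 0 := by
      apply Finset.sum_eq_zero; intro k hk
      rw [Nat.choose_eq_zero_of_lt (mem_range.mp hk)]; simp
    rw [h0, zero_add]
    apply Finset.sum_congr rfl; intro a ha
    have e : p + s + 1 - (p + a) = s + 1 - a := by omega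
    rw [e]
  have hres2 : ∑ ℓ ∈ range (p+s+1), ((ℓ.choose p : ℝ) / (ℓ.factorial * (ℓ+1).factorial * ((p+s-ℓ).factorial) * ((p+s+1-ℓ).factorial)))
      = ∑ a ∈ range (s+1), (((p+a).choose p : ℝ) / ((p+a).factorial * (p+a+1).factorial * ((s-a).factorial) * ((s+1-a).factorial))) := by
    rw [show p+s+1 = p + (s+1) by ring, Finset.sum_range_add]
    have h0 : ∑ ℓ ∈ range p, ((ℓ.choose p : ℝ) / (ℓ.factorial * (ℓ+1).factorial * ((p+s-ℓ).factorial) * ((p+s+1-ℓ).factorial))) = 0 := by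
      apply Finset.sum_eq_zero; intro k hk
      rw [Nat.choose_eq_zero_of_lt (mem_range.mp hk)]; simp
    rw [show (∑ x ∈ range p, ((x.choose p : ℝ) / (x.factorial * (x+1).factorial * ((p+s-x).factorial) * ((p+(s+1)-x).factorial)))) = ∑ x ∈ range p, ((x.choose p : ℝ) / (x.factorial * (x+1).factorial * ((p+s-x).factorial) * ((p+s+1-x).factorial))) from by apply Finset.sum_congr rfl; intro x hx; rw [show p+(s+1)-x = p+s+1-x from by omega], h0, zero_add]
    apply Finset.sum_congr rfl; intro a ha
    have e1 : p + s - (p + a) = s - a := by omega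
    have e2 : p + (s + 1) - (p + a) = s + 1 - a := by omega
    rw [e1, e2]
  rw [hres1, hres2]
  set f : ℕ → ℝ := fun a => (a:ℝ) * ((p+a).choose p : ℝ) / (((p:ℝ)+s+2) * ((p+a).factorial:ℝ)^2 * (((s+1-a).factorial:ℝ))^2) with hf
  have key : ∀ a ∈ range (s+1),
      (((p+a).choose p : ℝ) / ((p+a).factorial * (p+a+1).factorial * ((s-a).factorial) * ((s+1-a).factorial)))
      = ((s:ℝ)+1)/((p:ℝ)+s+2) * (((p+a).choose p : ℝ) / (((p+a).factorial:ℝ)^2 * (((s+1-a).factorial:ℝ))^2))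
        + (f (a+1) - f a) := by
    intro a ha
    have ha' : a ≤ s := by simpa using Nat.lt_succ_iff.mp (mem_range.mp ha)
    obtain ⟨b, hb⟩ : ∃ b, s = a + b := ⟨s - a, by omega⟩
    subst hb
    have e1 : a + b + 1 - a = b + 1 := by omega
    have e2 : a + b - a = b := by omega
    have e3 : a + b + 1 - (a+1) = b := by omega
    have := cert p a b
    simp only [hf, e1, e2, e3]
    push_cast at this ⊢
    convert this using 2 <;> push_cast <;> ring
  rw [Finset.sum_congr rfl key, Finset.sum_add_distrib, Finset.sum_range_sub f]
  have hf0 : f 0 = 0 := by simp [hf]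
  have hfs : f (s+1) = ((s:ℝ)+1)/((p:ℝ)+s+2) * (((p+(s+1)).choose p : ℝ) / (((p+(s+1)).factorial:ℝ)^2 * (((s+1-(s+1)).factorial:ℝ))^2)) := by
    simp only [hf, Nat.sub_self, Nat.factorial_zero]
    have hA : (((p+(s+1)).factorial:ℝ)) ≠ 0 := Nat.cast_ne_zero.mpr (Nat.factorial_ne_zero _)
    have hq : ((p:ℝ)+s+2) ≠ 0 := by positivity
    push_cast at hA ⊢
    field_simp
  rw [hf0, sub_zero, hfs, Finset.sum_range_succ, mul_add, Finset.mul_sum]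

noncomputable def Wc (y D : ℝ) (ℓ m : ℕ) : ℝ :=
  (1/2) * ∑ j ∈ Finset.range (ℓ+1), (ℓ.choose j : ℝ) * D^(ℓ-j) * y^(m+j+1) / ((m+j+1 : ℕ) : ℝ)

noncomputable def Qc (y D : ℝ) (n : ℕ) : ℝ :=
  ∑ ℓ ∈ Finset.range (n+1),
    Wc y D ℓ (n-ℓ) / ((2:ℝ)^n * ℓ.factorial * (ℓ+1).factorial * (n-ℓ).factorial * ((n-ℓ)+1).factorial)

noncomputable def Qs (y D : ℝ) : ℕ → ℝ
  | 0 => 0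
  | (n+1) => Qc y D n

lemma keyId (y D : ℝ) (n : ℕ) :
    (∑ k ∈ range (n+1), ((y+D)/2)^k * (y/2)^(n-k) / ((k.factorial:ℝ)^2 * (((n-k).factorial:ℝ))^2)) / ((n:ℝ)+1)
    = D^n / ((2:ℝ)^n * n.factorial * (n+1).factorial) + Qs y D n := by
  cases n with
  | zero => simp [Qs, Nat.factorial]
  | succ N =>
    -- LHS transformation
    have per_k : ∀ k ∈ range (N+2),
        ((y+D)/2)^k * (y/2)^(N+1-k) / ((k.factorial:ℝ)^2 * (((N+1-k).factorial:ℝ))^2)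
        = ∑ i ∈ range (N+2), (k.choose i : ℝ) * D^i * y^(N+1-i) / ((2:ℝ)^(N+1) * (k.factorial:ℝ)^2 * (((N+1-k).factorial:ℝ))^2) := by
      intro k hk
      have hk' : k < N+2 := mem_range.mp hk
      have h2k : ((2:ℝ))^k * (2:ℝ)^(N+1-k) = 2^(N+1) := by rw [← pow_add]; congr 1; omega
      have hexp : (D+y)^k = ∑ i ∈ range (k+1), D^i * y^(k-i) * (k.choose i : ℝ) := add_pow D y k
      calc ((y+D)/2)^k * (y/2)^(N+1-k) / ((k.factorial:ℝ)^2 * (((N+1-k).factorial:ℝ))^2)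
          = (∑ i ∈ range (k+1), D^i * y^(k-i) * (k.choose i:ℝ)) * y^(N+1-k)
              / ((2:ℝ)^k * (2:ℝ)^(N+1-k) * (k.factorial:ℝ)^2 * (((N+1-k).factorial:ℝ))^2) := by
            rw [div_pow, div_pow, show y + D = D + y from add_comm y D, hexp]; ring
        _ = ∑ i ∈ range (k+1), (k.choose i:ℝ) * D^i * y^(N+1-i) / ((2:ℝ)^(N+1) * (k.factorial:ℝ)^2 * (((N+1-k).factorial:ℝ))^2) := by
            rw [Finset.sum_mul, Finset.sum_div]
            apply Finset.sum_congr rfl; intro i hi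
            have hik : i ≤ k := by have := mem_range.mp hi; omega
            have hy : y^(k-i) * y^(N+1-k) = y^(N+1-i) := by rw [← pow_add]; congr 1; omega
            rw [← h2k, ← hy]; ring
        _ = ∑ i ∈ range (N+2), (k.choose i:ℝ) * D^i * y^(N+1-i) / ((2:ℝ)^(N+1) * (k.factorial:ℝ)^2 * (((N+1-k).factorial:ℝ))^2) := by
            apply Finset.sum_subset
            · intro i hi; rw [mem_range] at hi ⊢; omega
            · intro i hi hni
              rw [mem_range] at hi hni
              rw [Nat.choose_eq_zero_of_lt (by omega)]; simp
    -- RHS transformation : Wc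
    have hW : ∀ ℓ ∈ range (N+1), Wc y D ℓ (N-ℓ)
        = (1/2) * ∑ i ∈ range (N+2), (ℓ.choose i : ℝ) * D^i * y^(N+1-i) / (((N+1-i : ℕ)) : ℝ) := by
      intro ℓ hℓ
      have hℓ' : ℓ ≤ N := by have := mem_range.mp hℓ; omega
      rw [Wc]
      congr 1
      have hrefl := Finset.sum_range_reflect
        (fun j => (ℓ.choose j : ℝ) * D^(ℓ-j) * y^((N-ℓ)+j+1) / (((N-ℓ)+j+1 : ℕ) : ℝ)) (ℓ+1)
      rw [← hrefl]
      have step : ∀ i ∈ range (ℓ+1),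
          (ℓ.choose (ℓ+1-1-i) : ℝ) * D^(ℓ-(ℓ+1-1-i)) * y^((N-ℓ)+(ℓ+1-1-i)+1) / (((N-ℓ)+(ℓ+1-1-i)+1 : ℕ) : ℝ)
          = (ℓ.choose i : ℝ) * D^i * y^(N+1-i) / (((N+1-i : ℕ)) : ℝ) := by
        intro i hi
        have hiℓ : i ≤ ℓ := by have := mem_range.mp hi; omega
        have e0 : ℓ+1-1-i = ℓ-i := by omega
        have e1 : ℓ - (ℓ-i) = i := by omega
        have e2 : (N-ℓ)+(ℓ-i)+1 = N+1-i := by omega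
        have e3 : ℓ.choose (ℓ-i) = ℓ.choose i := by
          rw [← Nat.choose_symm hiℓ]
        rw [e0, e1, e2, e3]
      rw [Finset.sum_congr rfl step]
      apply Finset.sum_subset
      · intro i hi; rw [mem_range] at hi ⊢; omega
      · intro i hi hni
        rw [mem_range] at hi hni
        rw [Nat.choose_eq_zero_of_lt (by omega)]; simp
    -- coefficientwise comparison
    have hQ : Qs y D (N+1) = ∑ i ∈ range (N+2),
        (D^i * y^(N+1-i) / (((N+1-i : ℕ)) : ℝ)) *
          ∑ ℓ ∈ range (N+1), (ℓ.choose i : ℝ) / ((2:ℝ)^(N+1) * ℓ.factorial * (ℓ+1).factorial * (N-ℓ).factorial * ((N-ℓ)+1).factorial) := by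
      show Qc y D N = _
      rw [Qc, Finset.sum_congr rfl (fun ℓ hℓ => by rw [hW ℓ hℓ])]
      have inner : ∀ ℓ ∈ range (N+1),
          (1/2 * ∑ i ∈ range (N+2), (ℓ.choose i:ℝ) * D^i * y^(N+1-i) / (((N+1-i : ℕ)) : ℝ))
            / ((2:ℝ)^N * ℓ.factorial * (ℓ+1).factorial * (N-ℓ).factorial * ((N-ℓ)+1).factorial)
          = ∑ i ∈ range (N+2), (D^i * y^(N+1-i) / (((N+1-i : ℕ)) : ℝ)) *
              ((ℓ.choose i : ℝ) / ((2:ℝ)^(N+1) * ℓ.factorial * (ℓ+1).factorial * (N-ℓ).factorial * ((N-ℓ)+1).factorial)) := by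
        intro ℓ hℓ
        rw [Finset.mul_sum, Finset.sum_div]
        apply Finset.sum_congr rfl; intro i hi
        rw [pow_succ]
        ring
      rw [Finset.sum_congr rfl inner, Finset.sum_comm]
      exact Finset.sum_congr rfl (fun i _ => (Finset.mul_sum _ _ _).symm)
    -- final assembly
    rw [Finset.sum_congr rfl per_k, Finset.sum_comm, show Qs y D (N+1) = Qc y D N from rfl, ← show Qs y D (N+1) = Qc y D N from rfl, hQ]
    have hc2 : ((N+1 : ℕ) : ℝ) + 1 = (N:ℝ)+2 := by push_cast; ring
    rw [hc2]
    conv_lhs => rw [Finset.sum_range_succ]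
    conv_rhs => rw [Finset.sum_range_succ]
    rw [add_div]
    have hA0 : (((N+1).factorial : ℝ)) ≠ 0 := Nat.cast_ne_zero.mpr (Nat.factorial_ne_zero _)
    have hN2 : ((N:ℝ)+2) ≠ 0 := by positivity
    have htop : (∑ k ∈ range (N+2), (k.choose (N+1) : ℝ) * D^(N+1) * y^(N+1-(N+1)) / ((2:ℝ)^(N+1) * (k.factorial:ℝ)^2 * (((N+1-k).factorial:ℝ))^2))/((N:ℝ)+2)
        = D^(N+1) / ((2:ℝ)^(N+1) * (N+1).factorial * (N+1+1).factorial) := by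
      rw [Finset.sum_range_succ]
      have hz : ∑ k ∈ range (N+1), (k.choose (N+1) : ℝ) * D^(N+1) * y^(N+1-(N+1)) / ((2:ℝ)^(N+1) * (k.factorial:ℝ)^2 * (((N+1-k).factorial:ℝ))^2) = 0 := by
        apply Finset.sum_eq_zero; intro k hk
        rw [Nat.choose_eq_zero_of_lt (mem_range.mp hk)]; simp
      rw [hz, zero_add, Nat.choose_self, Nat.sub_self]
      rw [show (N+1+1).factorial = (N+2) * (N+1).factorial from by rw [show N+1+1 = (N+1)+1 from rfl, Nat.factorial_succ]]
      simp only [Nat.factorial_zero, Nat.cast_one, Nat.cast_mul, Nat.cast_ofNat, Nat.cast_add]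
      rw [div_div]
      rw [div_eq_div_iff (by positivity) (by positivity)]
      ring
    rw [htop]
    have hmid : ∀ i ∈ range (N+1),
        (∑ k ∈ range (N+2), (k.choose i : ℝ) * D^i * y^(N+1-i) / ((2:ℝ)^(N+1) * (k.factorial:ℝ)^2 * (((N+1-k).factorial:ℝ))^2))/((N:ℝ)+2)
        = (D^i * y^(N+1-i) / (((N+1-i : ℕ)) : ℝ)) *
            ∑ ℓ ∈ range (N+1), (ℓ.choose i : ℝ) / ((2:ℝ)^(N+1) * ℓ.factorial * (ℓ+1).factorial * (N-ℓ).factorial * ((N-ℓ)+1).factorial) := by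
      intro i hi
      have hiN : i ≤ N := by have := mem_range.mp hi; omega
      have hc := coeff i (N-i)
      rw [show i + (N-i) = N from by omega] at hc
      have hν : (((N+1-i : ℕ)) : ℝ) = (N:ℝ)-i+1 := by
        rw [Nat.cast_sub (by omega : i ≤ N+1)]; push_cast; ring
      have hcast : ((N-i : ℕ) : ℝ) = (N:ℝ)-i := by rw [Nat.cast_sub hiN]
      rw [hcast] at hc
      have hν0 : ((N:ℝ)-i+1) ≠ 0 := by
        have : (i:ℝ) ≤ N := by exact_mod_cast hiN
        linarith
      -- pull constants out of both sums
      have hL : ∑ k ∈ range (N+2), (k.choose i : ℝ) * D^i * y^(N+1-i) / ((2:ℝ)^(N+1) * (k.factorial:ℝ)^2 * (((N+1-k).factorial:ℝ))^2)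
          = (D^i * y^(N+1-i) / (2:ℝ)^(N+1)) * ∑ k ∈ range (N+2), ((k.choose i : ℝ) / ((k.factorial:ℝ)^2 * (((N+1-k).factorial:ℝ))^2)) := by
        rw [Finset.mul_sum]
        apply Finset.sum_congr rfl; intro k hk; ring
      have hR : ∑ ℓ ∈ range (N+1), (ℓ.choose i : ℝ) / ((2:ℝ)^(N+1) * ℓ.factorial * (ℓ+1).factorial * (N-ℓ).factorial * ((N-ℓ)+1).factorial)
          = (1/(2:ℝ)^(N+1)) * ∑ ℓ ∈ range (N+1), ((ℓ.choose i : ℝ) / (ℓ.factorial * (ℓ+1).factorial * ((N-ℓ).factorial) * ((N+1-ℓ).factorial))) := by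
        rw [Finset.mul_sum]
        apply Finset.sum_congr rfl; intro ℓ hℓ
        rw [show N+1-ℓ = (N-ℓ)+1 from by have := mem_range.mp hℓ; omega]
        ring
      rw [hL, hR, hν, ← hc]
      rw [show (i:ℝ) + ((N:ℝ) - i) + 2 = (N:ℝ)+2 by ring]
      field_simp
    rw [Finset.sum_div, Finset.sum_congr rfl hmid]
    simp only [Nat.sub_self, Nat.cast_zero, div_zero, zero_mul, add_zero]
    ring

noncomputable def Pc (x y : ℝ) (n : ℕ) : ℝ :=
  ∑ k ∈ range (n+1), (x/2)^k * (y/2)^(n-k) / ((k.factorial:ℝ)^2 * (((n-k).factorial:ℝ))^2)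

-- summability helpers
lemma fact_one_le (k : ℕ) : (1:ℝ) ≤ (k.factorial : ℝ) := by exact_mod_cast k.factorial_pos

lemma sum_sq (c : ℝ) (hc : 0 ≤ c) :
    Summable (fun k : ℕ => c^k / ((k.factorial:ℝ) * k.factorial)) := by
  apply Summable.of_nonneg_of_le (fun k => by positivity) (fun k => ?_)
    (Real.summable_pow_div_factorial c)
  calc c^k / ((k.factorial:ℝ) * k.factorial) = (c^k / k.factorial) / k.factorial := by ring
    _ ≤ c^k / k.factorial := div_le_self (by positivity) (fact_one_le k)

lemma sumH_norm (R E : ℝ) : Summable (fun ℓ : ℕ =>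
    ‖R^(ℓ+1) * E^ℓ / (2^ℓ * (ℓ.factorial:ℝ) * ((ℓ+1).factorial:ℝ))‖) := by
  apply Summable.of_nonneg_of_le (fun k => norm_nonneg _) (fun ℓ => ?_)
    ((Real.summable_pow_div_factorial (abs R * abs E / 2)).mul_left (abs R))
  rw [Real.norm_eq_abs, abs_div, abs_mul, abs_pow, abs_pow]
  have h1 : |(2:ℝ)^ℓ * (ℓ.factorial:ℝ) * ((ℓ+1).factorial:ℝ)| = 2^ℓ * (ℓ.factorial:ℝ) * ((ℓ+1).factorial:ℝ) := by
    rw [abs_of_nonneg]; positivity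
  rw [h1]
  have h2 : |R|^(ℓ+1) * |E|^ℓ / (2^ℓ * (ℓ.factorial:ℝ) * ((ℓ+1).factorial:ℝ))
      = |R| * ((abs R * abs E/2)^ℓ / ((ℓ.factorial:ℝ) * ((ℓ+1).factorial:ℝ))) := by
    rw [div_pow, mul_pow, pow_succ]
    ring
  rw [h2]
  apply mul_le_mul_of_nonneg_left ?_ (abs_nonneg R)
  calc (abs R * abs E/2)^ℓ / ((ℓ.factorial:ℝ) * ((ℓ+1).factorial:ℝ))
      = ((abs R * abs E/2)^ℓ / (ℓ.factorial:ℝ)) / ((ℓ+1).factorial:ℝ) := by ring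
    _ ≤ (abs R * abs E/2)^ℓ / (ℓ.factorial:ℝ) := div_le_self (by positivity) (fact_one_le _)

lemma sum_sq_norm (c : ℝ) (hc : 0 ≤ c) :
    Summable (fun k : ℕ => ‖c^k / ((k.factorial:ℝ) * k.factorial)‖) := by
  have : ∀ k : ℕ, ‖c^k / ((k.factorial:ℝ) * k.factorial)‖ = c^k / ((k.factorial:ℝ) * k.factorial) := by
    intro k; rw [Real.norm_eq_abs, abs_of_nonneg (by positivity)]
  rw [funext this]
  exact sum_sq c hc

-- Bessel series
lemma besselI_eq (L t : ℝ) (ht : 0 ≤ t) :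
    besselI 0 (L * Real.sqrt (2*t)) = ∑' k : ℕ, (L^2*t/2)^k / ((k.factorial:ℝ) * k.factorial) := by
  rw [besselI]
  apply tsum_congr; intro k
  have h : ((L * Real.sqrt (2*t))/2)^(2*k+0) = (L^2*t/2)^k := by
    rw [add_zero, pow_mul]
    congr 1
    rw [div_pow, mul_pow, Real.sq_sqrt (by linarith)]
    ring
  rw [h, add_zero]

lemma Pc_term (x y r : ℝ) (n : ℕ) :
    ∑ k ∈ range (n+1), ((x*r/2)^k/((k.factorial:ℝ)*k.factorial)) * ((y*r/2)^(n-k)/((((n-k).factorial):ℝ)*((n-k).factorial))) = Pc x y n * r^n := by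
  rw [Pc, Finset.sum_mul]
  apply Finset.sum_congr rfl; intro k hk
  have hk' : k ≤ n := by have := mem_range.mp hk; omega
  have hr : r^k * r^(n-k) = r^n := by rw [← pow_add]; congr 1; omega
  rw [show (x*r/2) = (x/2)*r from by ring, show (y*r/2) = (y/2)*r from by ring, mul_pow, mul_pow, ← hr]
  ring

lemma bessel_prod (L₁ L₂ r : ℝ) (hr : 0 ≤ r) :
    besselI 0 (L₁ * Real.sqrt (2*r)) * besselI 0 (L₂ * Real.sqrt (2*r))
      = ∑' n : ℕ, Pc (L₁^2) (L₂^2) n * r^n := by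
  rw [besselI_eq _ _ hr, besselI_eq _ _ hr,
    tsum_mul_tsum_eq_tsum_sum_range_of_summable_norm
      (sum_sq_norm _ (by positivity)) (sum_sq_norm _ (by positivity))]
  exact tsum_congr (fun n => Pc_term _ _ _ n)

-- power series integration
lemma integral_tsum_pow (c : ℕ → ℝ) (hc : ∀ n, 0 ≤ c n) {R : ℝ} (hR : 0 ≤ R)
    (hs : Summable (fun n => c n * R ^ n)) :
    ∫ r in Set.Ioc (0:ℝ) R, (∑' n : ℕ, c n * r ^ n) = ∑' n : ℕ, c n * (R ^ (n+1) / ((n:ℝ)+1)) := by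
  have hint : ∀ n : ℕ, IntegrableOn (fun r => c n * r^n) (Set.Ioc (0:ℝ) R) volume :=
    fun n => Continuous.integrableOn_Ioc (by continuity)
  have hval : ∀ n : ℕ, ∫ r in Set.Ioc (0:ℝ) R, c n * r^n = c n * (R^(n+1)/((n:ℝ)+1)) := by
    intro n
    rw [← intervalIntegral.integral_of_le hR, intervalIntegral.integral_const_mul,
      integral_pow]
    push_cast
    rw [zero_pow (Nat.succ_ne_zero n), sub_zero]
  have hnorm : ∀ n : ℕ, ∫ r in Set.Ioc (0:ℝ) R, ‖c n * r^n‖ = c n * (R^(n+1)/((n:ℝ)+1)) := by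
    intro n
    rw [← hval n]
    apply MeasureTheory.setIntegral_congr_fun measurableSet_Ioc
    intro r hr
    exact norm_of_nonneg (mul_nonneg (hc n) (pow_nonneg hr.1.le n))
  have hsum : Summable (fun n : ℕ => ∫ r in Set.Ioc (0:ℝ) R, ‖c n * r^n‖) := by
    apply (summable_congr hnorm).mpr
    apply Summable.of_nonneg_of_le (fun n => mul_nonneg (hc n) (by positivity)) (fun n => ?_) (hs.mul_left R)
    · calc c n * (R^(n+1)/((n:ℝ)+1)) ≤ c n * R^(n+1) :=
          mul_le_mul_of_nonneg_left (div_le_self (by positivity) (by push_cast; linarith [Nat.cast_nonneg (α := ℝ) n])) (hc n)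
        _ = R * (c n * R^n) := by rw [pow_succ]; ring
  rw [← MeasureTheory.integral_tsum_of_summable_integral_norm hint hsum]
  exact tsum_congr hval

lemma prod_term (R x y : ℝ) {n ℓ : ℕ} (hℓ : ℓ ≤ n) :
    (R^(ℓ+1) * x^ℓ / (2^ℓ * (ℓ.factorial:ℝ) * ((ℓ+1).factorial:ℝ)))
      * (R^((n-ℓ)+1) * y^(n-ℓ) / (2^(n-ℓ) * (((n-ℓ).factorial):ℝ) * (((n-ℓ)+1).factorial:ℝ)))
    = R^(n+2) * x^ℓ * y^(n-ℓ) / (2^n * (ℓ.factorial:ℝ) * ((ℓ+1).factorial:ℝ) * (((n-ℓ).factorial):ℝ) * (((n-ℓ)+1).factorial:ℝ)) := by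
  have hR : R^(ℓ+1) * R^((n-ℓ)+1) = R^(n+2) := by rw [← pow_add]; congr 1; omega
  have h2 : (2:ℝ)^ℓ * (2:ℝ)^(n-ℓ) = 2^n := by rw [← pow_add]; congr 1; omega
  rw [div_mul_div_comm, ← hR, ← h2]
  ring

lemma Hfun_mul (R a b K : ℝ) :
    Hfun R a K * Hfun R b K = ∑' n : ℕ, ∑ ℓ ∈ range (n+1),
      R^(n+2) * (a^2-K^2)^ℓ * (b^2-K^2)^(n-ℓ)
        / (2^n * (ℓ.factorial:ℝ) * ((ℓ+1).factorial:ℝ) * (((n-ℓ).factorial):ℝ) * (((n-ℓ)+1).factorial:ℝ)) := by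
  rw [Hfun, Hfun, tsum_mul_tsum_eq_tsum_sum_range_of_summable_norm (sumH_norm R _) (sumH_norm R _)]
  apply tsum_congr; intro n
  apply Finset.sum_congr rfl; intro ℓ hℓ
  exact prod_term R _ _ (by have := mem_range.mp hℓ; omega)

-- FTC computation
lemma integral_poly (x y L : ℝ) (hyL : y = L^2) (ℓ m : ℕ) :
    ∫ K in (0:ℝ)..L, (x - K^2)^ℓ * ((y - K^2)^m * K)
      = (1/2) * ∑ j ∈ range (ℓ+1), (ℓ.choose j : ℝ) * (x-y)^(ℓ-j) * y^(m+j+1) / ((m+j+1 : ℕ) : ℝ) := by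
  set G : ℝ → ℝ := fun K => -(1/2) * ∑ j ∈ range (ℓ+1),
    (ℓ.choose j : ℝ) * (x-y)^(ℓ-j) * (y - K^2)^(m+j+1) / ((m+j+1 : ℕ) : ℝ) with hGdef
  have hG : ∀ K : ℝ, HasDerivAt G ((x - K^2)^ℓ * ((y - K^2)^m * K)) K := by
    intro K
    have h0 : HasDerivAt (fun K : ℝ => y - K^2) (-(2*K)) K := by
      simpa using ((hasDerivAt_pow 2 K).const_sub y)
    have hterm : ∀ j ∈ range (ℓ+1), HasDerivAt
        (fun K : ℝ => (ℓ.choose j : ℝ) * (x-y)^(ℓ-j) * (y - K^2)^(m+j+1) / ((m+j+1 : ℕ) : ℝ))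
        ((ℓ.choose j : ℝ) * (x-y)^(ℓ-j) * (((m:ℝ)+j+1) * (y - K^2)^(m+j) * (-(2*K))) / ((m+j+1 : ℕ) : ℝ)) K := by
      intro j hj
      have hq : HasDerivAt (fun K : ℝ => (y - K^2)^(m+j+1))
          (((m:ℝ)+j+1) * (y - K^2)^(m+j) * (-(2*K))) K := by
        have := h0.fun_pow (m+j+1)
        simpa [Nat.add_sub_cancel] using this
      simpa [mul_div_assoc, mul_assoc] using
        ((hq.const_mul ((ℓ.choose j : ℝ) * (x-y)^(ℓ-j))).div_const ((m+j+1 : ℕ) : ℝ))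
    have hsum := HasDerivAt.fun_sum hterm
    have hGd := hsum.const_mul (-(1/2) : ℝ)
    have heq : (-(1/2) : ℝ) * (∑ j ∈ range (ℓ+1),
        (ℓ.choose j : ℝ) * (x-y)^(ℓ-j) * (((m:ℝ)+j+1) * (y - K^2)^(m+j) * (-(2*K))) / ((m+j+1 : ℕ) : ℝ))
        = (x - K^2)^ℓ * ((y - K^2)^m * K) := by
      have hexp : (x - K^2)^ℓ = ∑ j ∈ range (ℓ+1), (y - K^2)^j * (x-y)^(ℓ-j) * (ℓ.choose j : ℝ) := by
        rw [show x - K^2 = (y - K^2) + (x - y) from by ring]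
        exact add_pow _ _ ℓ
      rw [hexp, Finset.sum_mul, Finset.mul_sum]
      apply Finset.sum_congr rfl; intro j hj
      have hd : ((m+j+1 : ℕ) : ℝ) ≠ 0 := Nat.cast_ne_zero.mpr (by omega)
      have hcast : ((m+j+1 : ℕ) : ℝ) = (m:ℝ)+j+1 := by push_cast; ring
      rw [hcast] at hd ⊢
      have hp : (y - K^2)^(m+j) = (y - K^2)^m * (y - K^2)^j := by rw [← pow_add]
      rw [hp]
      field_simp
    exact heq ▸ hGd
  have hint : IntervalIntegrable (fun K : ℝ => (x - K^2)^ℓ * ((y - K^2)^m * K)) volume 0 L :=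
    (by continuity : Continuous fun K : ℝ => (x - K^2)^ℓ * ((y - K^2)^m * K)).intervalIntegrable 0 L
  rw [intervalIntegral.integral_eq_sub_of_hasDerivAt (fun K _ => hG K) hint]
  have hGL : G L = 0 := by
    rw [hGdef]
    simp only
    rw [show y - L^2 = 0 from by rw [hyL]; ring]
    have : ∀ j ∈ range (ℓ+1), (ℓ.choose j : ℝ) * (x-y)^(ℓ-j) * (0:ℝ)^(m+j+1) / ((m+j+1 : ℕ) : ℝ) = 0 := by
      intro j hj
      rw [zero_pow (by omega : m+j+1 ≠ 0)]
      ring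
    rw [Finset.sum_congr rfl this]
    simp
  have hG0 : G 0 = -(1/2) * ∑ j ∈ range (ℓ+1), (ℓ.choose j : ℝ) * (x-y)^(ℓ-j) * y^(m+j+1) / ((m+j+1 : ℕ) : ℝ) := by
    rw [hGdef]
    simp
  rw [hGL, hG0]
  ring

lemma integral_Vn (R x y L : ℝ) (hL : 0 ≤ L) (hyL : y = L^2) (n : ℕ) :
    (∫ K in (0:ℝ)..L, (∑ ℓ ∈ range (n+1),
      R^(n+2) * (x-K^2)^ℓ * (y-K^2)^(n-ℓ)
        / (2^n * (ℓ.factorial:ℝ) * ((ℓ+1).factorial:ℝ) * (((n-ℓ).factorial):ℝ) * (((n-ℓ)+1).factorial:ℝ))) * K)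
    = R^(n+2) * Qc y (x - y) n := by
  have hrw : ∀ K : ℝ, (∑ ℓ ∈ range (n+1),
      R^(n+2) * (x-K^2)^ℓ * (y-K^2)^(n-ℓ)
        / (2^n * (ℓ.factorial:ℝ) * ((ℓ+1).factorial:ℝ) * (((n-ℓ).factorial):ℝ) * (((n-ℓ)+1).factorial:ℝ))) * K
      = ∑ ℓ ∈ range (n+1),
      (R^(n+2) / (2^n * (ℓ.factorial:ℝ) * ((ℓ+1).factorial:ℝ) * (((n-ℓ).factorial):ℝ) * (((n-ℓ)+1).factorial:ℝ)))
        * ((x-K^2)^ℓ * ((y-K^2)^(n-ℓ) * K)) := by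
    intro K
    rw [Finset.sum_mul]
    apply Finset.sum_congr rfl; intro ℓ hℓ
    ring
  rw [intervalIntegral.integral_congr (fun K _ => hrw K)]
  rw [intervalIntegral.integral_finset_sum (fun ℓ _ =>
    ((by continuity : Continuous fun K : ℝ =>
      (R^(n+2) / (2^n * (ℓ.factorial:ℝ) * ((ℓ+1).factorial:ℝ) * (((n-ℓ).factorial):ℝ) * (((n-ℓ)+1).factorial:ℝ)))
        * ((x-K^2)^ℓ * ((y-K^2)^(n-ℓ) * K))).intervalIntegrable 0 L))]
  rw [Qc, Finset.mul_sum]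
  apply Finset.sum_congr rfl; intro ℓ hℓ
  rw [intervalIntegral.integral_const_mul, integral_poly x y L hyL ℓ (n-ℓ), Wc]
  ring

lemma Kintegral (R L₁ L₂ : ℝ) (hR : 0 ≤ R) (h12 : L₂ ≤ L₁) (h2 : 0 < L₂) (h1 : 0 ≤ L₁) :
    (∫ K in (0:ℝ)..L₂, Hfun R L₁ K * Hfun R L₂ K * K)
      = ∑' n : ℕ, R^(n+2) * Qc (L₂^2) (L₁^2 - L₂^2) n
    ∧ Summable (fun n : ℕ => R^(n+2) * Qc (L₂^2) (L₁^2 - L₂^2) n) := by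
  set x := L₁^2 with hx
  set y := L₂^2 with hy
  set V : ℕ → ℝ → ℝ := fun n K => (∑ ℓ ∈ range (n+1),
      R^(n+2) * (x-K^2)^ℓ * (y-K^2)^(n-ℓ)
        / (2^n * (ℓ.factorial:ℝ) * ((ℓ+1).factorial:ℝ) * (((n-ℓ).factorial):ℝ) * (((n-ℓ)+1).factorial:ℝ))) * K
    with hV
  have hpt : ∀ K : ℝ, Hfun R L₁ K * Hfun R L₂ K * K = ∑' n : ℕ, V n K := by
    intro K
    rw [Hfun_mul, ← tsum_mul_right]
  have hcont : ∀ n, Continuous (V n) := by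
    intro n
    exact (continuous_finset_sum _ (fun ℓ _ => by continuity)).mul continuous_id
  have hVint : ∀ n, IntegrableOn (V n) (Set.Ioc (0:ℝ) L₂) volume :=
    fun n => (hcont n).integrableOn_Ioc
  have hval : ∀ n, ∫ K in Set.Ioc (0:ℝ) L₂, V n K = R^(n+2) * Qc y (x - y) n := by
    intro n
    rw [← intervalIntegral.integral_of_le h2.le]
    exact integral_Vn R x y L₂ h2.le hy n
  -- bound
  set M : ℕ → ℝ := fun n => (∑ ℓ ∈ range (n+1),
      R^(n+2) * x^ℓ * y^(n-ℓ)
        / (2^n * (ℓ.factorial:ℝ) * ((ℓ+1).factorial:ℝ) * (((n-ℓ).factorial):ℝ) * (((n-ℓ)+1).factorial:ℝ))) * L₂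
    with hM
  have hbound : ∀ n, ∀ K ∈ Set.Ioc (0:ℝ) L₂, ‖V n K‖ ≤ M n := by
    intro n K hK
    obtain ⟨hK0, hKL⟩ := hK
    have hKx : K^2 ≤ y := by rw [hy]; exact pow_le_pow_left₀ hK0.le hKL 2
    have hyx : y ≤ x := by rw [hx, hy]; exact pow_le_pow_left₀ (by linarith) h12 2
    have hxK : 0 ≤ x - K^2 := by linarith
    have hyK : 0 ≤ y - K^2 := by linarith
    have hVnn : 0 ≤ V n K := by
      apply mul_nonneg _ hK0.le
      apply Finset.sum_nonneg; intro ℓ _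
      have h1' : 0 ≤ (x - K^2)^ℓ := pow_nonneg hxK ℓ
      have h2' : 0 ≤ (y - K^2)^(n-ℓ) := pow_nonneg hyK (n-ℓ)
      positivity
    rw [norm_of_nonneg hVnn, hV, hM]
    have hxnn : (0:ℝ) ≤ x := by rw [hx]; positivity
    have hynn : (0:ℝ) ≤ y := by rw [hy]; positivity
    simp only
    apply mul_le_mul ?_ hKL hK0.le ?_
    · apply Finset.sum_le_sum
      intro ℓ hℓ
      have hden : (0:ℝ) < 2^n * (ℓ.factorial:ℝ) * ((ℓ+1).factorial:ℝ) * (((n-ℓ).factorial):ℝ) * (((n-ℓ)+1).factorial:ℝ) := by positivity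
      have h1' : (x - K^2)^ℓ ≤ x^ℓ := pow_le_pow_left₀ hxK (by linarith [sq_nonneg K]) ℓ
      have h2' : (y - K^2)^(n-ℓ) ≤ y^(n-ℓ) := pow_le_pow_left₀ hyK (by linarith [sq_nonneg K]) (n-ℓ)
      have hRn : (0:ℝ) ≤ R^(n+2) := pow_nonneg hR _
      have hnum : R^(n+2) * (x-K^2)^ℓ * (y-K^2)^(n-ℓ) ≤ R^(n+2) * x^ℓ * y^(n-ℓ) :=
        mul_le_mul (mul_le_mul_of_nonneg_left h1' hRn) h2' (pow_nonneg hyK _)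
          (mul_nonneg hRn (pow_nonneg hxnn _))
      first
      | exact (div_le_div_right hden).mpr hnum
      | exact (div_le_div_iff_right hden).mpr hnum
      | exact div_le_div_of_nonneg_right hnum hden
      | exact div_le_div_of_nonneg_right hnum hden.le
    · apply Finset.sum_nonneg; intro ℓ _
      have hRn : (0:ℝ) ≤ R^(n+2) := pow_nonneg hR _
      have hxl : (0:ℝ) ≤ x^ℓ := pow_nonneg hxnn _
      have hyl : (0:ℝ) ≤ y^(n-ℓ) := pow_nonneg hynn _
      positivity
  have hMsum : Summable M := by
    have hc : Summable (fun n : ℕ => ∑ k ∈ range (n+1),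
        (R^(k+1) * x^k / (2^k * (k.factorial:ℝ) * ((k+1).factorial:ℝ)))
          * (R^((n-k)+1) * y^(n-k) / (2^(n-k) * (((n-k).factorial):ℝ) * (((n-k)+1).factorial:ℝ)))) :=
      (summable_norm_sum_mul_range_of_summable_norm (sumH_norm R x) (sumH_norm R y)).of_norm
    apply (hc.mul_right L₂).congr
    intro n
    rw [hM]
    congr 1
    apply Finset.sum_congr rfl; intro ℓ hℓ
    exact prod_term R x y (by have := mem_range.mp hℓ; omega)
  have hnormint : Summable (fun n : ℕ => ∫ K in Set.Ioc (0:ℝ) L₂, ‖V n K‖) := by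
    apply Summable.of_nonneg_of_le
      (fun n => integral_nonneg (fun K => norm_nonneg _)) (fun n => ?_) (hMsum.mul_right L₂)
    calc ∫ K in Set.Ioc (0:ℝ) L₂, ‖V n K‖
        ≤ ∫ _K in Set.Ioc (0:ℝ) L₂, M n := by
          apply setIntegral_mono_on ((hVint n).norm) ((integrableOn_const_iff).mpr (Or.inr (by
            rw [Real.volume_Ioc]; exact ENNReal.ofReal_lt_top))) measurableSet_Ioc (hbound n)
      _ = M n * L₂ := by
          rw [setIntegral_const, Real.volume_real_Ioc_of_le h2.le, smul_eq_mul]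
          ring
  have hswap := MeasureTheory.integral_tsum_of_summable_integral_norm hVint hnormint
  constructor
  · rw [intervalIntegral.integral_of_le h2.le]
    rw [setIntegral_congr_fun measurableSet_Ioc (fun K _ => hpt K), ← hswap]
    exact tsum_congr hval
  · apply Summable.of_norm_bounded hnormint
    intro n
    rw [← hval n]
    exact norm_integral_le_integral_norm _


theorem stmt4 (R : ℝ) (hR : 0 ≤ R) (L₁ L₂ : ℝ) (h12 : L₂ ≤ L₁) (h2 : 0 < L₂) :
    (∫ r in (0:ℝ)..R, besselI 0 (L₁ * Real.sqrt (2 * r)) * besselI 0 (L₂ * Real.sqrt (2 * r))) =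
      Hfun R L₁ L₂ + ∫ K in (0:ℝ)..L₂, Hfun R L₁ K * Hfun R L₂ K * K := by
  have h1 : (0:ℝ) ≤ L₁ := by linarith
  set x := L₁^2 with hx
  set y := L₂^2 with hy
  set D := x - y with hD
  have hxyD : x = y + D := by rw [hD]; ring
  have hxnn : (0:ℝ) ≤ x := by rw [hx]; positivity
  have hynn : (0:ℝ) ≤ y := by rw [hy]; positivity
  have hPs : Summable (fun n : ℕ => Pc x y n * R^n) := by
    apply ((summable_norm_sum_mul_range_of_summable_norm
      (sum_sq_norm (x*R/2) (by positivity)) (sum_sq_norm (y*R/2) (by positivity))).of_norm).congr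
    intro n; exact Pc_term x y R n
  have hPnn : ∀ n, 0 ≤ Pc x y n := by
    intro n
    apply Finset.sum_nonneg; intro k _
    apply div_nonneg (mul_nonneg (pow_nonneg (by linarith) k) (pow_nonneg (by linarith) _)) (by positivity)
  have hLHS : (∫ r in (0:ℝ)..R, besselI 0 (L₁ * Real.sqrt (2*r)) * besselI 0 (L₂ * Real.sqrt (2*r)))
      = ∑' n : ℕ, Pc x y n * (R^(n+1)/((n:ℝ)+1)) := by
    rw [intervalIntegral.integral_of_le hR]
    rw [setIntegral_congr_fun measurableSet_Ioc (fun r hr => bessel_prod L₁ L₂ r hr.1.le)]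
    exact integral_tsum_pow (Pc x y) hPnn hR hPs
  obtain ⟨hKval, hKsum⟩ := Kintegral R L₁ L₂ hR h12 h2 h1
  have hHsum : Summable (fun n : ℕ => D^n/((2:ℝ)^n * n.factorial * (n+1).factorial) * R^(n+1)) := by
    apply (sumH_norm R D).of_norm.congr
    intro n; ring
  have hQsum : Summable (fun n : ℕ => Qs y D n * R^(n+1)) := by
    rw [← summable_nat_add_iff 1]
    apply hKsum.congr
    intro n
    show R^(n+2) * Qc y D n = Qs y D (n+1) * R^(n+1+1)
    rw [show Qs y D (n+1) = Qc y D n from rfl]; ring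
  have hterm : ∀ n : ℕ, Pc x y n * (R^(n+1)/((n:ℝ)+1))
      = D^n/((2:ℝ)^n * n.factorial * (n+1).factorial) * R^(n+1) + Qs y D n * R^(n+1) := by
    intro n
    have hk := keyId y D n
    have hPc : Pc x y n = ∑ k ∈ Finset.range (n+1),
        ((y+D)/2)^k * (y/2)^(n-k) / ((k.factorial:ℝ)^2 * (((n-k).factorial:ℝ))^2) := by
      rw [Pc, hxyD]
    calc Pc x y n * (R^(n+1)/((n:ℝ)+1)) = ((∑ k ∈ Finset.range (n+1),
          ((y+D)/2)^k * (y/2)^(n-k) / ((k.factorial:ℝ)^2 * (((n-k).factorial:ℝ))^2))/((n:ℝ)+1)) * R^(n+1) := by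
          rw [← hPc]; ring
      _ = (D^n/((2:ℝ)^n * n.factorial * (n+1).factorial) + Qs y D n) * R^(n+1) := by rw [hk]
      _ = _ := by ring
  rw [hLHS, tsum_congr hterm, Summable.tsum_add hHsum hQsum]
  congr 1
  · rw [Hfun, ← hx, ← hy, ← hD]
    apply tsum_congr; intro n; ring
  · rw [hKval, Summable.tsum_eq_zero_add hQsum]
    rw [show Qs y D 0 * R^(0+1) = 0 from by rw [show Qs y D 0 = (0:ℝ) from rfl]; ring]
    rw [zero_add]
    apply tsum_congr; intro n
    rw [show Qs y D (n+1) = Qc y D n from rfl]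
    ring
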